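/- arXiv:1711.02246 — 2 statements merged into one kernel-verified Lean document; each statement's English description precedes it below -/
import Mathlib

section
/- In a CFG, if v1 postdominates v and v2 postdominates v1 (hence v2 postdominates v), then LAP(v,v2) = LAP(v,v1) + LAP(v1,v2). -/
namespace Slicing

/-- A path is a nonempty list of nodes, consecutive ones related by `succ`,
starting at `v` and ending at `v'`. -/
def IsPath {V : Type} (succ : V → V → Prop) (p : List V) (v v' : V) : Prop :=
  p.Chain' succ ∧ p.head? = some v ∧ p.getLast? = some v'

/-- A control-flow graph: an edge relation and an `End` node with no successors,
reachable from every node. -/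
structure CFG (V : Type) where
  succ : V → V → Prop
  End : V
  end_no_succ : ∀ w, ¬ succ End w
  reach_end : ∀ v, ∃ p, IsPath succ p v End

variable {V : Type}

/-- `v1` postdominates `v`. -/
def PD (G : CFG V) (v v1 : V) : Prop :=
  ∀ p, IsPath G.succ p v G.End → v1 ∈ p

/-- `v1` is a proper postdominator of `v`. -/
def ProperPD (G : CFG V) (v v1 : V) : Prop :=
  PD G v v1 ∧ v1 ≠ v

/-- `v1` is a first proper postdominator of `v`: every path from `v` to any other
proper postdominator of `v` contains `v1`. -/
def IsFPPD (G : CFG V) (v v1 : V) : Prop :=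
  ProperPD G v v1 ∧
    ∀ v2, ProperPD G v v2 → v2 ≠ v1 → ∀ p, IsPath G.succ p v v2 → v1 ∈ p

/-- Maximum number of edges of an acyclic path from `v` to `v'`. -/
noncomputable def LAP (G : CFG V) (v v' : V) : ℕ :=
  sSup {n | ∃ p, IsPath G.succ p v v' ∧ p.Nodup ∧ p.length = n + 1}

/-- A node is cycle-inducing if, with `v'` its first proper postdominator,
some successor `vi` of `v` satisfies `LAP vi v' ≥ LAP v v'`. -/
def CycleInducing (G : CFG V) (v : V) : Prop :=
  ∃ v', IsFPPD G v v' ∧ ∃ vi, G.succ v vi ∧ LAP G v v' ≤ LAP G vi v'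

/-- `v` stays outside `Q` until `v'`: every path from `v` to `v'` in which `v'`
occurs only at the final position contains no node of `Q` except possibly `v'`. -/
def StaysOutside (G : CFG V) (Q : Set V) (v v' : V) : Prop :=
  ∀ p, IsPath G.succ p v v' → v' ∉ p.dropLast → ∀ w ∈ p, w ∈ Q → w = v'

/-- `v2` is data dependent on `v1`. -/
def DataDep {Var : Type} (G : CFG V) (Def Use : V → Set Var) (v1 v2 : V) : Prop :=
  ∃ x, x ∈ Use v2 ∧ x ∈ Def v1 ∧
    ∃ p, IsPath G.succ p v1 v2 ∧ 2 ≤ p.length ∧ ∀ w ∈ p.tail.dropLast, x ∉ Def w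

/-- `Q` is closed under data dependence. -/
def ClosedDD {Var : Type} (G : CFG V) (Def Use : V → Set Var) (Q : Set V) : Prop :=
  ∀ v1 v2, v2 ∈ Q → DataDep G Def Use v1 v2 → v1 ∈ Q

/-- The `Q`-relevant variables at `v`. -/
def rv {Var : Type} (G : CFG V) (Def Use : V → Set Var) (Q : Set V) (v : V) : Set Var :=
  {x | ∃ v' ∈ Q, x ∈ Use v' ∧
    ∃ p, IsPath G.succ p v v' ∧ p.Nodup ∧ ∀ w ∈ p, w ≠ v' → x ∉ Def w}

/-- `v'` is a next visible in `Q` of `v`. -/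
def IsNextVisible (G : CFG V) (Q : Set V) (v v' : V) : Prop :=
  (v' ∈ Q ∨ v' = G.End) ∧
    ∀ u, (u ∈ Q ∨ u = G.End) → ∀ p, IsPath G.succ p v u → v' ∈ p

/-- `Q` provides next visibles. -/
def ProvidesNextVisibles (G : CFG V) (Q : Set V) : Prop :=
  ∀ v, ∃ v', IsNextVisible G Q v v'

/-- A weak slice set provides next visibles and is closed under data dependence. -/
def WeakSliceSet {Var : Type} (G : CFG V) (Def Use : V → Set Var) (Q : Set V) : Prop :=
  ProvidesNextVisibles G Q ∧ ClosedDD G Def Use Q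

end Slicing

namespace Slicing

variable {V : Type}

lemma isPath_ne_nil {succ : V → V → Prop} {p : List V} {v v' : V}
    (h : IsPath succ p v v') : p ≠ [] := by
  rintro rfl; simp [IsPath] at h

lemma mem_of_getLast?_eq {p : List V} {a : V} (h : p.getLast? = some a) : a ∈ p := by
  have hne : p ≠ [] := by rintro rfl; simp at h
  rw [List.getLast?_eq_getLast hne] at h
  obtain rfl : p.getLast hne = a := by simpa using h
  exact List.getLast_mem hne

lemma IsPath.append {succ : V → V → Prop} {p q : List V} {v w u : V}
    (hp : IsPath succ p v w) (hq : IsPath succ q w u) :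
    IsPath succ (p ++ q.tail) v u := by
  obtain ⟨hcp, hhp, hlp⟩ := hp
  obtain ⟨hcq, hhq, hlq⟩ := hq
  obtain ⟨q', rfl⟩ := List.head?_eq_some_iff.mp hhq
  refine ⟨?_, ?_, ?_⟩
  · rw [List.Chain', List.isChain_append]
    refine ⟨hcp, hcq.tail, ?_⟩
    intro x hx y hy
    rw [hlp] at hx
    obtain rfl : w = x := by simpa using hx
    exact (List.isChain_cons.mp hcq).1 y hy
  · rw [List.head?_append, hhp]; rfl
  · cases q' with
    | nil =>
      obtain rfl : w = u := by simpa using hlq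
      simpa using hlp
    | cons b q'' =>
      rw [List.getLast?_append]
      simp only [List.tail_cons]
      rw [List.getLast?_cons_cons] at hlq
      rw [hlq]; rfl

lemma IsPath.split {succ : V → V → Prop} {p s t : List V} {v u w : V}
    (hp : IsPath succ p v u) (heq : p = s ++ w :: t) :
    IsPath succ (s ++ [w]) v w ∧ IsPath succ (w :: t) w u := by
  obtain ⟨hc, hh, hl⟩ := hp
  subst heq
  have h1 : s ++ w :: t = (s ++ [w]) ++ t := by simp
  constructor
  · refine ⟨?_, ?_, List.getLast?_concat⟩
    · rw [h1, List.Chain', List.isChain_append] at hc; exact hc.1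
    · cases s with
      | nil => simpa using hh
      | cons a s' => simpa using hh
  · refine ⟨?_, rfl, ?_⟩
    · rw [List.Chain', List.isChain_append] at hc; exact hc.2.1
    · rw [List.getLast?_append] at hl
      cases h' : (w :: t).getLast? with
      | none => simp at h'
      | some x =>
        rw [h'] at hl
        simpa using hl

lemma exists_nodup_path {succ : V → V → Prop} :
    ∀ (n : ℕ) (p : List V) (v u : V), p.length ≤ n → IsPath succ p v u →
      ∃ q, IsPath succ q v u ∧ q.Nodup ∧ q.Sublist p := by
  intro n
  induction n with
  | zero =>
    intro p v u hlen hp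
    exact absurd (List.length_eq_zero_iff.mp (Nat.le_zero.mp hlen)) (isPath_ne_nil hp)
  | succ n ih =>
    intro p v u hlen hp
    by_cases hnd : p.Nodup
    · exact ⟨p, hp, hnd, List.Sublist.refl p⟩
    · obtain ⟨x, hx⟩ := List.exists_duplicate_iff_not_nodup.mpr hnd
      have hsub : [x, x].Sublist p := List.duplicate_iff_sublist.mp hx
      rw [List.cons_sublist_iff] at hsub
      obtain ⟨r₁, r₂, rfl, hx1, hx2⟩ := hsub
      rw [List.singleton_sublist] at hx2
      obtain ⟨s, t1, rfl⟩ := List.append_of_mem hx1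
      obtain ⟨t1', t2, rfl⟩ := List.append_of_mem hx2
      have heq : (s ++ x :: t1) ++ (t1' ++ x :: t2) = s ++ x :: (t1 ++ t1' ++ x :: t2) := by
        simp
      have h1 := hp.split heq
      have h2 := h1.2.split (s := x :: (t1 ++ t1')) (t := t2) (w := x) (by simp)
      have hp' : IsPath succ ((s ++ [x]) ++ (x :: t2).tail) v u := h1.1.append h2.2
      have hlen' : ((s ++ [x]) ++ (x :: t2).tail).length ≤ n := by
        simp only [List.length_append, List.length_cons, List.tail_cons,
          List.length_nil] at hlen ⊢
        omega
      obtain ⟨q, hq, hqnd, hqsub⟩ := ih _ v u hlen' hp'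
      refine ⟨q, hq, hqnd, hqsub.trans ?_⟩
      simp only [List.tail_cons]
      have h3 : (s ++ [x]) ++ t2 = s ++ x :: t2 := by simp
      rw [h3, heq]
      refine (List.append_sublist_append_left s).mpr ?_
      rw [List.cons_sublist_cons]
      exact (List.sublist_cons_self x t2).trans (List.sublist_append_right (t1 ++ t1') (x :: t2))

lemma getLast?_append_right {l l' : List V} (h : l' ≠ []) :
    (l ++ l').getLast? = l'.getLast? := by
  rw [List.getLast?_append]
  cases h' : l'.getLast? with
  | none => exact absurd (List.getLast?_eq_none_iff.mp h') h
  | some x => rfl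

/-- In a nodup list ending at `a`, the element `a` does not occur in a proper prefix. -/
lemma not_mem_prefix_of_getLast {p s t : List V} {w a : V} (hnd : p.Nodup)
    (hst : p = s ++ w :: t) (hl : p.getLast? = some a) (hwa : w ≠ a) :
    a ∉ s ++ [w] := by
  subst hst
  have h1 : s ++ w :: t = (s ++ [w]) ++ t := by simp
  cases ht : t with
  | nil =>
    subst ht
    rw [List.getLast?_concat] at hl
    exact absurd (by simpa using hl) hwa
  | cons b t' =>
    subst ht
    rw [h1] at hnd hl
    rw [getLast?_append_right (by simp)] at hl
    have hat : a ∈ b :: t' := mem_of_getLast?_eq hl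
    intro hmem
    exact (List.nodup_append.mp hnd).2.2 _ hmem _ hat rfl

/-- In a nodup list starting at `b`, the element `b` does not occur in a proper suffix. -/
lemma not_mem_suffix_of_head {q s t : List V} {w b : V} (hnd : q.Nodup)
    (hst : q = s ++ w :: t) (hh : q.head? = some b) (hwb : w ≠ b) :
    b ∉ w :: t := by
  obtain ⟨rest, hrest⟩ := List.head?_eq_some_iff.mp hh
  cases s with
  | nil =>
    simp only [List.nil_append] at hst
    rw [hst] at hrest
    exact absurd (List.cons_eq_cons.mp hrest).1 hwb
  | cons c s' =>
    rw [hst] at hrest hnd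
    have hbc : c = b := (List.cons_eq_cons.mp hrest.symm).1.symm
    subst hbc
    simp only [List.cons_append] at hnd
    have hnotmem : c ∉ s' ++ w :: t := hnd.notMem
    intro hmem
    exact hnotmem (List.mem_append.mpr (Or.inr hmem))

/-- If `v1` postdominates `v` and `v2` postdominates `v1`, then
`LAP(v,v2) = LAP(v,v1) + LAP(v1,v2)`. -/
theorem LAP_add {V : Type} [Fintype V] (G : CFG V) (v v1 v2 : V)
    (h1 : PD G v v1) (h2 : PD G v1 v2) :
    LAP G v v2 = LAP G v v1 + LAP G v1 v2 := by
  classical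
  -- boundedness of the LAP sets
  have hbdd : ∀ a b : V,
      BddAbove {n | ∃ p, IsPath G.succ p a b ∧ p.Nodup ∧ p.length = n + 1} := by
    intro a b
    refine ⟨Fintype.card V, ?_⟩
    rintro n ⟨p, _, hnd, hlen⟩
    have := hnd.length_le_card
    omega
  -- the sup is attained
  have attain : ∀ a b : V, (∃ p, IsPath G.succ p a b ∧ p.Nodup) →
      ∃ p, IsPath G.succ p a b ∧ p.Nodup ∧ p.length = LAP G a b + 1 := by
    rintro a b ⟨p, hp, hnd⟩
    have hpos : 0 < p.length := List.length_pos_iff.mpr (isPath_ne_nil hp)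
    have hne : ({n | ∃ p, IsPath G.succ p a b ∧ p.Nodup ∧ p.length = n + 1} : Set ℕ).Nonempty :=
      ⟨p.length - 1, p, hp, hnd, by omega⟩
    exact Nat.sSup_mem hne (hbdd a b)
  -- any nodup path bounds LAP from below
  have hle : ∀ (a b : V) (p : List V), IsPath G.succ p a b → p.Nodup →
      p.length ≤ LAP G a b + 1 := by
    intro a b p hp hnd
    have hpos : 0 < p.length := List.length_pos_iff.mpr (isPath_ne_nil hp)
    have h : p.length - 1 ≤ LAP G a b :=
      le_csSup (hbdd a b) ⟨p, hp, hnd, by omega⟩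
    omega
  -- existence of nodup paths v → v1 and v1 → v2
  have ex1 : ∃ p, IsPath G.succ p v v1 ∧ p.Nodup := by
    obtain ⟨p0, hp0⟩ := G.reach_end v
    obtain ⟨s, t, hst⟩ := List.append_of_mem (h1 p0 hp0)
    obtain ⟨q, hq, hqnd, _⟩ := exists_nodup_path (s ++ [v1]).length _ _ _ le_rfl (hp0.split hst).1
    exact ⟨q, hq, hqnd⟩
  have ex2 : ∃ p, IsPath G.succ p v1 v2 ∧ p.Nodup := by
    obtain ⟨p0, hp0⟩ := G.reach_end v1
    obtain ⟨s, t, hst⟩ := List.append_of_mem (h2 p0 hp0)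
    obtain ⟨q, hq, hqnd, _⟩ := exists_nodup_path (s ++ [v2]).length _ _ _ le_rfl (hp0.split hst).1
    exact ⟨q, hq, hqnd⟩
  -- Fact F : every path from v to v2 contains v1
  have hF : ∀ p, IsPath G.succ p v v2 → v1 ∈ p := by
    intro p hp
    by_cases h12 : v1 = v2
    · subst h12; exact mem_of_getLast?_eq hp.2.2
    · have hfree : ∃ r', IsPath G.succ r' v2 G.End ∧ v1 ∉ r' := by
        obtain ⟨r0, hr0⟩ := G.reach_end v2
        obtain ⟨r, hr, hrnd, _⟩ := exists_nodup_path r0.length r0 _ _ le_rfl hr0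
        by_cases hv1r : v1 ∈ r
        · obtain ⟨s, t, hst⟩ := List.append_of_mem hv1r
          have hsp := hr.split hst
          have hv2t : v2 ∈ t := by
            rcases List.mem_cons.mp (h2 _ hsp.2) with h | h
            · exact absurd h.symm h12
            · exact h
          obtain ⟨t1, t2, ht⟩ := List.append_of_mem hv2t
          have hsp2 := hsp.2.split (s := v1 :: t1) (t := t2) (w := v2) (by rw [ht]; rfl)
          refine ⟨v2 :: t2, hsp2.2, ?_⟩
          have hv1t : v1 ∉ t := by
            rw [hst] at hrnd
            exact (List.Nodup.of_append_right hrnd).notMem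
          intro hmem
          rcases List.mem_cons.mp hmem with h | h
          · exact h12 h
          · exact hv1t (by rw [ht]; exact List.mem_append.mpr (Or.inr (List.mem_cons_of_mem _ h)))
        · exact ⟨r, hr, hv1r⟩
      obtain ⟨r', hr', hv1r'⟩ := hfree
      rcases List.mem_append.mp (h1 _ (hp.append hr')) with h | h
      · exact h
      · exact absurd (List.mem_of_mem_tail h) hv1r'
  -- Fact G : a nodup path v → v1 and a nodup path v1 → v2 meet only at v1
  have hG : ∀ p q : List V, IsPath G.succ p v v1 → p.Nodup → IsPath G.succ q v1 v2 → q.Nodup →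
      ∀ w, w ∈ p → w ∈ q → w = v1 := by
    intro p q hp hpnd hq hqnd w hwp hwq
    by_contra hw
    obtain ⟨s, t, hst⟩ := List.append_of_mem hwp
    have hsp := hp.split hst
    obtain ⟨s', t', hst'⟩ := List.append_of_mem hwq
    have hsq := hq.split hst'
    have hns : v1 ∉ s ++ [w] := not_mem_prefix_of_getLast hpnd hst hp.2.2 hw
    have hnt : v1 ∉ w :: t' := not_mem_suffix_of_head hqnd hst' hq.2.1 hw
    have hcomb : IsPath G.succ ((s ++ [w]) ++ (w :: t').tail) v v2 := hsp.1.append hsq.2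
    rcases List.mem_append.mp (hF _ hcomb) with h | h
    · exact hns h
    · exact hnt (List.mem_cons_of_mem _ (by simpa using h))
  -- extract maximal nodup paths
  obtain ⟨p, hp, hpnd, hpl⟩ := attain v v1 ex1
  obtain ⟨q, hq, hqnd, hql⟩ := attain v1 v2 ex2
  have hqpos : 0 < q.length := List.length_pos_iff.mpr (isPath_ne_nil hq)
  obtain ⟨q0, hq0⟩ := List.head?_eq_some_iff.mp hq.2.1
  have hcomb : IsPath G.succ (p ++ q.tail) v v2 := hp.append hq
  have hcombnd : (p ++ q.tail).Nodup := by
    rw [List.nodup_append]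
    refine ⟨hpnd, (List.tail_sublist q).nodup hqnd, ?_⟩
    intro w hwp w' hwt hww
    subst hww
    have hwq : w ∈ q := (List.tail_sublist q).subset hwt
    have hwv1 : w = v1 := hG p q hp hpnd hq hqnd w hwp hwq
    subst hwv1
    rw [hq0] at hwt hqnd
    exact hqnd.notMem (by simpa using hwt)
  have hcomblen : (p ++ q.tail).length = LAP G v v1 + LAP G v1 v2 + 1 := by
    rw [List.length_append, List.length_tail]
    omega
  -- ≥ direction
  have hge : LAP G v v1 + LAP G v1 v2 ≤ LAP G v v2 := by
    have := hle v v2 _ hcomb hcombnd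
    omega
  -- ≤ direction
  obtain ⟨r, hr, hrnd, hrl⟩ := attain v v2 ⟨_, hcomb, hcombnd⟩
  obtain ⟨s, t, hst⟩ := List.append_of_mem (hF r hr)
  have hsp := hr.split hst
  have hnd1 : (s ++ [v1]).Nodup := by
    refine List.Sublist.nodup ?_ hrnd
    rw [hst]
    exact (List.append_sublist_append_left s).mpr
      (List.cons_sublist_cons.mpr (List.nil_sublist t))
  have hnd2 : (v1 :: t).Nodup := by
    refine List.Sublist.nodup ?_ hrnd
    rw [hst]
    exact List.sublist_append_right s (v1 :: t)
  have hb1 := hle v v1 _ hsp.1 hnd1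
  have hb2 := hle v1 v2 _ hsp.2 hnd2
  have hrlen : r.length = s.length + t.length + 1 := by
    rw [hst]; simp only [List.length_append, List.length_cons]; omega
  simp only [List.length_append, List.length_cons, List.length_nil] at hb1 hb2
  omega

end Slicing
end

section
/- In a CFG, assume the node set Q provides next visibles and that every cycle contains a node of Q. Then every cycle-inducing node belongs to Q. -/
namespace Slicing


section Helpers

variable {V : Type} {succ : V → V → Prop}

lemma IsPath.ne_nil {p : List V} {v v' : V} (h : IsPath succ p v v') : p ≠ [] := by
  rintro rfl; simp [IsPath] at h

lemma IsPath.length_pos {p : List V} {v v' : V} (h : IsPath succ p v v') : 0 < p.length :=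
  List.length_pos_iff.mpr h.ne_nil

lemma IsPath.getElem_zero {p : List V} {v v' : V} (h : IsPath succ p v v')
    (h0 : 0 < p.length) : p[0] = v := by
  have := h.2.1
  rw [List.head?_eq_getElem?, List.getElem?_eq_getElem h0] at this
  exact Option.some_injective _ this

lemma IsPath.getElem_last {p : List V} {v v' : V} (h : IsPath succ p v v')
    (hl : p.length - 1 < p.length) : p[p.length - 1] = v' := by
  have := h.2.2
  rw [List.getLast?_eq_getElem?, List.getElem?_eq_getElem hl] at this
  exact Option.some_injective _ this

lemma IsPath.cons {p : List V} {v v' w : V} (hs : succ w v) (h : IsPath succ p v v') :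
    IsPath succ (w :: p) w v' := by
  refine ⟨List.isChain_cons.2 ⟨fun y hy => ?_, h.1⟩, rfl, ?_⟩
  · rw [h.2.1] at hy; cases hy; exact hs
  · rw [List.getLast?_cons, h.2.2]; rfl

/-- truncating a path at position `j` yields a path to `p[j]`. -/
lemma IsPath.take_getElem {p : List V} {v v' : V} (h : IsPath succ p v v')
    (j : ℕ) (hj : j < p.length) : IsPath succ (p.take (j + 1)) v p[j] := by
  have hlen : (p.take (j + 1)).length = j + 1 := by
    rw [List.length_take]; omega
  refine ⟨h.1.prefix (List.take_prefix _ _), ?_, ?_⟩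
  · rw [List.head?_eq_getElem?, ← h.2.1, List.head?_eq_getElem?, List.getElem?_take]
    simp
  · rw [List.getLast?_eq_getElem?, hlen, Nat.add_sub_cancel, List.getElem?_take,
      if_pos (Nat.lt_succ_self j), List.getElem?_eq_getElem hj]

lemma IsPath.take_mem {p : List V} {v v' x : V} (h : IsPath succ p v v') (hx : x ∈ p) :
    ∃ q, IsPath succ q v x ∧ q ⊆ p := by
  obtain ⟨j, hj, rfl⟩ := List.mem_iff_getElem.1 hx
  exact ⟨p.take (j + 1), h.take_getElem j hj, List.take_subset _ _⟩

lemma chain'_getElem {p : List V} (h : p.Chain' succ) {i : ℕ} (hi : i + 1 < p.length) :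
    succ p[i] p[i+1] := by
  have := List.isChain_iff_getElem.1 h i (by omega)
  simpa using this

/-- every path can be shortened to a duplicate-free path with same endpoints. -/
lemma shorten_aux : ∀ (n : ℕ) (p : List V) (v v' : V), p.length = n → IsPath succ p v v' →
    ∃ q, IsPath succ q v v' ∧ q.Nodup ∧ ∀ a ∈ q, a ∈ p := by
  intro n
  induction n using Nat.strong_induction_on with
  | _ n ih =>
  intro p v v' hn h
  subst hn
  by_cases hnd : p.Nodup
  · exact ⟨p, h, hnd, fun a ha => ha⟩
  obtain ⟨x, hdup⟩ := List.exists_duplicate_iff_not_nodup.2 hnd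
  obtain ⟨⟨i, hi⟩, ⟨j, hj⟩, hlt, hx1, hx2⟩ := List.duplicate_iff_exists_distinct_get.1 hdup
  simp only [List.get_eq_getElem] at hx1 hx2
  have hij : i < j := hlt
  set q : List V := p.take (i + 1) ++ p.drop (j + 1) with hq
  have hlent : (p.take (i+1)).length = i + 1 := by rw [List.length_take]; omega
  have hqpath : IsPath succ q v v' := by
    refine ⟨?_, ?_, ?_⟩
    · refine List.isChain_append.2 ⟨h.1.prefix (List.take_prefix _ _), h.1.drop _, ?_⟩
      intro a ha b hb
      rw [List.getLast?_eq_getElem?, hlent, Nat.add_sub_cancel, List.getElem?_take,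
        if_pos (Nat.lt_succ_self i), List.getElem?_eq_getElem hi] at ha
      cases ha
      rw [List.head?_drop] at hb
      have hjlen : j + 1 < p.length := by
        by_contra hc
        rw [List.getElem?_eq_none (by omega)] at hb
        simp at hb
      rw [List.getElem?_eq_getElem hjlen] at hb
      cases hb
      have := chain'_getElem h.1 hjlen
      rwa [← hx2, hx1] at this
    · rw [List.head?_append, List.head?_eq_getElem?, List.getElem?_take]
      simp [← List.head?_eq_getElem?, h.2.1]
    · rw [List.getLast?_append]
      by_cases hdn : p.drop (j+1) = []
      · have hjlen : p.length ≤ j + 1 := by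
          have := (List.length_drop (i := j+1) (l := p)) ▸ congrArg List.length hdn
          simp at this; omega
        have hj1 : j = p.length - 1 := by omega
        rw [hdn]
        simp only [List.getLast?_nil, Option.none_or]
        rw [List.getLast?_eq_getElem?, hlent, Nat.add_sub_cancel, List.getElem?_take,
          if_pos (Nat.lt_succ_self i), List.getElem?_eq_getElem hi]
        have : p[j] = v' := by
          have := h.getElem_last (by omega)
          simp_rw [← hj1] at this; exact this
        rw [← hx2, hx1] at this
        rw [this]
      · have : (p.drop (j+1)).getLast? = some v' := by
          rw [List.getLast?_eq_getElem?, List.getElem?_drop, List.length_drop]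
          have hjlen : j + 1 < p.length := by
            by_contra hc
            exact hdn (List.drop_eq_nil_of_le (by omega))
          have harith : j + 1 + (p.length - (j+1) - 1) = p.length - 1 := by omega
          rw [harith, List.getElem?_eq_getElem (by omega), h.getElem_last (by omega)]
        rw [this]; rfl
  have hqlen : q.length < p.length := by
    rw [List.length_append, hlent, List.length_drop]; omega
  obtain ⟨r, hr, hrnd, hrsub⟩ := ih q.length hqlen q v v' rfl hqpath
  refine ⟨r, hr, hrnd, fun a ha => ?_⟩
  rcases List.mem_append.1 (hrsub a ha) with h' | h'
  · exact List.take_subset _ _ h'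
  · exact List.drop_subset _ _ h'

lemma IsPath.shorten {p : List V} {v v' : V} (h : IsPath succ p v v') :
    ∃ q, IsPath succ q v v' ∧ q.Nodup ∧ ∀ a ∈ q, a ∈ p :=
  shorten_aux p.length p v v' rfl h


end Helpers

section LAPHelpers

variable {V : Type} [Fintype V]

lemma lap_bddAbove (G : CFG V) (v v' : V) :
    BddAbove {n | ∃ p, IsPath G.succ p v v' ∧ p.Nodup ∧ p.length = n + 1} := by
  refine ⟨Fintype.card V, fun n hn => ?_⟩
  obtain ⟨p, _, hnd, hlen⟩ := hn
  have := hnd.length_le_card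
  omega

lemma length_le_lap (G : CFG V) {p : List V} {v v' : V}
    (h : IsPath G.succ p v v') (hnd : p.Nodup) : p.length ≤ LAP G v v' + 1 := by
  have hpos := h.length_pos
  have hmem : p.length - 1 ∈ {n | ∃ p, IsPath G.succ p v v' ∧ p.Nodup ∧ p.length = n + 1} :=
    ⟨p, h, hnd, by omega⟩
  have := le_csSup (lap_bddAbove G v v') hmem
  unfold LAP
  omega

lemma lap_attained (G : CFG V) {v v' : V} (h : ∃ p, IsPath G.succ p v v') :
    ∃ p, IsPath G.succ p v v' ∧ p.Nodup ∧ p.length = LAP G v v' + 1 := by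
  obtain ⟨p0, hp0⟩ := h
  obtain ⟨q, hq, hnd, -⟩ := hp0.shorten
  have hne : Set.Nonempty {n | ∃ p, IsPath G.succ p v v' ∧ p.Nodup ∧ p.length = n + 1} :=
    ⟨q.length - 1, q, hq, hnd, by have := hq.length_pos; omega⟩
  exact Nat.sSup_mem hne (lap_bddAbove G v v')

end LAPHelpers

/-- If `Q` provides next visibles and every cycle contains a node of `Q`,
then every cycle-inducing node belongs to `Q`. -/
theorem cycle_inducing_mem {V : Type} [Fintype V] (G : CFG V) (Q : Set V)
    (hpn : ProvidesNextVisibles G Q)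
    (hcyc : ∀ u p, IsPath G.succ p u u → 2 ≤ p.length → ∃ w ∈ p, w ∈ Q)
    (v : V) (hci : CycleInducing G v) :
    v ∈ Q := by
  obtain ⟨v', hfppd, vi, hsucc, hle⟩ := hci
  have hv'ne : v' ≠ v := hfppd.1.2
  -- v' postdominates vi
  have hPDvi : ∀ p, IsPath G.succ p vi G.End → v' ∈ p := by
    intro p hp
    have h2 : IsPath G.succ (v :: p) v G.End := hp.cons hsucc
    have := hfppd.1.1 (v :: p) h2
    rcases List.mem_cons.1 this with h | h
    · exact absurd h hv'ne
    · exact h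
  -- there is a path from vi to v'
  have hex : ∃ p, IsPath G.succ p vi v' := by
    obtain ⟨p0, hp0⟩ := G.reach_end vi
    obtain ⟨q, hq, -⟩ := hp0.take_mem (hPDvi p0 hp0)
    exact ⟨q, hq⟩
  -- maximal acyclic path p from vi to v'
  obtain ⟨p, hp, hnd, hlen⟩ := lap_attained G hex
  -- v :: p is a path from v to v' that is too long to be acyclic
  have hvp : IsPath G.succ (v :: p) v v' := hp.cons hsucc
  have hvmem : v ∈ p := by
    by_contra hvm
    have hnd' : (v :: p).Nodup := List.nodup_cons.2 ⟨hvm, hnd⟩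
    have := length_le_lap G hvp hnd'
    simp only [List.length_cons, hlen] at this
    omega
  -- build the cycle c
  obtain ⟨i, hi, hpi⟩ := List.mem_iff_getElem.1 hvmem
  have htake : IsPath G.succ (p.take (i + 1)) vi v := hpi ▸ hp.take_getElem i hi
  set c : List V := v :: p.take (i + 1) with hc
  have hcpath : IsPath G.succ c v v := htake.cons hsucc
  have hclen : 2 ≤ c.length := by
    have := htake.length_pos
    simp [hc]
    omega
  -- v' is not on the cycle
  have hv'c : v' ∉ c := by
    intro hmem
    rcases List.mem_cons.1 hmem with h | h
    · exact hv'ne h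
    · obtain ⟨j, hj, hpj⟩ := List.mem_iff_getElem.1 h
      rw [List.length_take] at hj
      have hj' : j < p.length := by omega
      have hpj' : p[j] = v' := by
        rw [← hpj, List.getElem_take]
      have hlast : p[p.length - 1] = v' := hp.getElem_last (by omega)
      have hji : j = p.length - 1 := by
        have := (hnd.getElem_inj_iff (hi := hj') (hj := by omega)).1
          (hpj'.trans hlast.symm)
        exact this
      have hij : i = j := by omega
      subst hij
      exact hv'ne (hpi ▸ hpj').symm
  -- the cycle contains a node of Q
  obtain ⟨w, hwc, hwQ⟩ := hcyc v c hcpath hclen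
  -- next visible of v
  obtain ⟨u, huQ, hunext⟩ := hpn v
  by_cases huv : u = v
  · subst huv
    rcases huQ with h | h
    · exact h
    · exact absurd hsucc (h ▸ G.end_no_succ vi)
  · -- u lies on the cycle
    obtain ⟨q1, hq1, hq1sub⟩ := hcpath.take_mem hwc
    have huq1 : u ∈ q1 := hunext w (Or.inl hwQ) q1 hq1
    have huc : u ∈ c := hq1sub huq1
    -- path from v to u inside the cycle
    obtain ⟨q2, hq2, hq2sub⟩ := hcpath.take_mem huc
    by_cases huv' : u = v'
    · exact absurd (huv' ▸ huc) hv'c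
    · have hPDu : ProperPD G v u := ⟨fun p hp => hunext G.End (Or.inr rfl) p hp, huv⟩
      have := hfppd.2 u hPDu huv' q2 hq2
      exact absurd (hq2sub this) hv'c

end Slicing
end
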